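/- For any point P in an n-dimensional simplex with vertices A₁,…,A_{n+1} in ℝⁿ, the sum ∑_{i=1}^{n+1} ‖PA_i‖ is at most the maximum over vertices A_i of the sum of the n edge lengths ∑_{j≠i} ‖A_iA_j‖. -/

import Mathlib

theorem stmt3 (n : ℕ) (A : Fin (n + 1) → EuclideanSpace ℝ (Fin n))
    (hA : AffineIndependent ℝ A)
    (P : EuclideanSpace ℝ (Fin n))
    (hP : P ∈ convexHull ℝ (Set.range A)) :
    ∑ i, dist P (A i) ≤
      Finset.univ.sup' Finset.univ_nonempty
        (fun i => ∑ j ∈ Finset.univ.erase i, dist (A i) (A j)) := by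
  have hconv : ConvexOn ℝ Set.univ (fun x => ∑ i, dist x (A i)) := by
    have := Finset.sum_induction _ _ (fun f g hf hg => hf.add hg)
      (convexOn_const 0 convex_univ) (fun i _ => convexOn_dist (A i) convex_univ) (s := Finset.univ)
    convert this using 2
    · rfl
    · simp [Finset.sum_apply]
  obtain ⟨y, ⟨k, rfl⟩, hk⟩ :=
    hconv.exists_ge_of_mem_convexHull (Set.subset_univ _) hP
  refine hk.trans ?_
  have : ∑ i, dist (A k) (A i) = ∑ j ∈ Finset.univ.erase k, dist (A k) (A j) := by
    rw [← Finset.add_sum_erase _ _ (Finset.mem_univ k), dist_self, zero_add]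
  rw [this]
  exact Finset.le_sup' (fun i => ∑ j ∈ Finset.univ.erase i, dist (A i) (A j)) (Finset.mem_univ k)
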